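/- Let C⁰⁰, C¹¹, C⁰¹ be real numbers, β ∈ (0,1), δ = √(1-β²), and F = C⁰⁰ + C¹¹β² - 2C⁰¹β, and assume F ≠ 0. Let I ⊆ ℝ be an open interval and let w : I → ℝ be twice continuously differentiable with w''(s) = (w'(s))² for all s ∈ I. Define v(t,x) = (δ²/F)·w((t - βx)/δ) on the open set Ω = {(t,x) ∈ ℝ² : (t - βx)/δ ∈ I}. Then v satisfies ∂²_t v - ∂²_x v = C⁰⁰(∂_t v)² + C¹¹(∂_x v)² + 2C⁰¹(∂_t v)(∂_x v) on Ω. -/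

import Mathlib

open Set

/-- The Lorentz ansatz: if `w'' = (w')²` on an open interval `I`, then
`v(t,x) = (δ²/F) w((t - βx)/δ)` with `δ = √(1-β²)` and `F = C⁰⁰ + C¹¹β² - 2C⁰¹β ≠ 0` solves
`∂²_t v - ∂²_x v = C⁰⁰ v_t² + C¹¹ v_x² + 2C⁰¹ v_t v_x` wherever `(t - βx)/δ ∈ I`. -/
theorem lorentz_ansatz_reduction
    (C00 C11 C01 β : ℝ) (hβ : β ∈ Set.Ioo (0 : ℝ) 1)
    (δ : ℝ) (hδ : δ = Real.sqrt (1 - β ^ 2))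
    (F : ℝ) (hF : F = C00 + C11 * β ^ 2 - 2 * C01 * β) (hF0 : F ≠ 0)
    (I : Set ℝ) (hI : ∃ a b : ℝ, I = Set.Ioo a b)
    (w w' : ℝ → ℝ)
    (hw1 : ∀ s ∈ I, HasDerivAt w (w' s) s)
    (hw2 : ∀ s ∈ I, HasDerivAt w' (w' s ^ 2) s)
    (v : ℝ → ℝ → ℝ)
    (hv : ∀ t x, v t x = δ ^ 2 / F * w ((t - β * x) / δ)) :
    ∀ t x : ℝ, (t - β * x) / δ ∈ I →
      deriv (fun t' => deriv (fun t'' => v t'' x) t') t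
        - deriv (fun x' => deriv (fun x'' => v t x'') x') x
      = C00 * (deriv (fun t' => v t' x) t) ^ 2
        + C11 * (deriv (fun x' => v t x') x) ^ 2
        + 2 * C01 * (deriv (fun t' => v t' x) t) * (deriv (fun x' => v t x') x) := by
  obtain ⟨hβ0, hβ1⟩ := hβ
  have hδ2 : δ ^ 2 = 1 - β ^ 2 := by
    rw [hδ, Real.sq_sqrt]; nlinarith
  have hδ0 : (0:ℝ) < δ := by
    rw [hδ]; exact Real.sqrt_pos.mpr (by nlinarith)
  have hδ0' : δ ≠ 0 := ne_of_gt hδ0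
  have hIopen : IsOpen I := by obtain ⟨a, b, rfl⟩ := hI; exact isOpen_Ioo
  intro t x hs
  have hst : ∀ (t' x' : ℝ), HasDerivAt (fun u => (u - β * x') / δ) (1/δ) t' := by
    intro t' x'
    simpa using ((hasDerivAt_id t').sub_const (β * x')).div_const δ
  have hsx : ∀ (t' x' : ℝ), HasDerivAt (fun u => (t' - β * u) / δ) (-β/δ) x' := by
    intro t' x'
    have h1 : HasDerivAt (fun u => t' - β * u) (-β) x' := by
      simpa using ((hasDerivAt_id x').const_mul β).const_sub t'
    simpa using h1.div_const δ
  have hvt : ∀ (t' x' : ℝ), (t' - β * x') / δ ∈ I →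
      HasDerivAt (fun u => v u x') (δ / F * w' ((t' - β * x') / δ)) t' := by
    intro t' x' h
    have h1 := ((hw1 _ h).comp t' (hst t' x')).const_mul (δ^2/F)
    simp only [Function.comp] at h1
    have he : (fun u => δ^2/F * w ((u - β * x')/δ)) = fun u => v u x' := by
      funext u; rw [hv]
    rw [he] at h1
    refine h1.congr_deriv ?_
    field_simp
  have hvx : ∀ (t' x' : ℝ), (t' - β * x') / δ ∈ I →
      HasDerivAt (fun u => v t' u) (-(β * δ) / F * w' ((t' - β * x') / δ)) x' := by
    intro t' x' h
    have h1 := ((hw1 _ h).comp x' (hsx t' x')).const_mul (δ^2/F)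
    simp only [Function.comp] at h1
    have he : (fun u => δ^2/F * w ((t' - β * u)/δ)) = fun u => v t' u := by
      funext u; rw [hv]
    rw [he] at h1
    refine h1.congr_deriv ?_
    field_simp
  -- second t-derivative
  have hUt : IsOpen {t' : ℝ | (t' - β * x) / δ ∈ I} :=
    hIopen.preimage (by fun_prop)
  have hUx : IsOpen {x' : ℝ | (t - β * x') / δ ∈ I} :=
    hIopen.preimage (by fun_prop)
  have hevt : (fun t' => deriv (fun t'' => v t'' x) t') =ᶠ[nhds t]
      (fun t' => δ / F * w' ((t' - β * x) / δ)) := by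
    filter_upwards [hUt.mem_nhds hs] with t' ht'
    exact (hvt t' x ht').deriv
  have hevx : (fun x' => deriv (fun x'' => v t x'') x') =ᶠ[nhds x]
      (fun x' => -(β * δ) / F * w' ((t - β * x') / δ)) := by
    filter_upwards [hUx.mem_nhds hs] with x' hx'
    exact (hvx t x' hx').deriv
  have h2t : HasDerivAt (fun t' => δ / F * w' ((t' - β * x) / δ))
      (1 / F * w' ((t - β * x) / δ) ^ 2) t := by
    have h1 := ((hw2 _ hs).comp t (hst t x)).const_mul (δ/F)
    refine h1.congr_deriv ?_
    field_simp
  have h2x : HasDerivAt (fun x' => -(β * δ) / F * w' ((t - β * x') / δ))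
      (β ^ 2 / F * w' ((t - β * x) / δ) ^ 2) x := by
    have h1 := ((hw2 _ hs).comp x (hsx t x)).const_mul (-(β * δ)/F)
    refine h1.congr_deriv ?_
    field_simp
  rw [hevt.deriv_eq, hevx.deriv_eq, h2t.deriv, h2x.deriv,
    (hvt t x hs).deriv, (hvx t x hs).deriv]
  field_simp
  linear_combination (-(w' ((t - β * x) / δ))^2 * F) * hδ2
    + (δ^2 * (w' ((t - β * x) / δ))^2) * hF
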